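/- Let X and Y be nontrivial real normed spaces and let 1 < p ≤ ∞. Then the ℓp-sum X ⊕_p Y (the product X × Y equipped with the norm ‖(x, y)‖ = (‖x‖^p + ‖y‖^p)^{1/p} for p < ∞ and ‖(x, y)‖ = max(‖x‖, ‖y‖) for p = ∞) is not decomposably octahedral. -/

import Mathlib

/-- Decomposable octahedrality (DOH). -/
def DecomposablyOctahedral (X : Type*) [NormedAddCommGroup X] [NormedSpace ℝ X] : Prop :=
  ∀ E : Finset X, (∀ x ∈ E, ‖x‖ = 1) → ∀ ε : ℝ, 0 < ε → ∃ y : X, ‖y‖ = 1 ∧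
    ∀ (n : ℕ) (ys : Fin n → X), ∑ i, ys i = y →
      ∀ xs : Fin n → X, (∀ i, xs i ∈ E) →
      ∀ a b : Fin n → ℝ, (∀ i, 0 ≤ a i) → (∀ i, 0 ≤ b i) →
        (1 - ε) * ((∑ i, (a i + b i)) + 2) ≤
          ∑ i, (‖a i • xs i + ys i‖ + ‖b i • xs i - ys i‖)

/-- For nontrivial `X`, `Y` and `1 < p ≤ ∞`, the ℓ_p-sum `X ⊕_p Y` is not DOH. -/
theorem not_doh_lp_sum (X Y : Type*) [NormedAddCommGroup X] [NormedSpace ℝ X]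
    [NormedAddCommGroup Y] [NormedSpace ℝ Y] [Nontrivial X] [Nontrivial Y]
    (p : ENNReal) [Fact (1 ≤ p)] (hp : 1 < p) :
    ¬ DecomposablyOctahedral (WithLp p (X × Y)) := by
  classical
  intro hdoh
  obtain ⟨u, hu⟩ := exists_norm_eq X (zero_le_one)
  obtain ⟨v, hv⟩ := exists_norm_eq Y (zero_le_one)
  set J := (WithLp.equiv p (X × Y)).symm with hJ
  set e1 : WithLp p (X × Y) := J (u, 0) with he1
  set e2 : WithLp p (X × Y) := J (0, v) with he2
  have hne1 : ‖e1‖ = 1 := by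
    rw [he1, hJ, WithLp.equiv_symm_apply, WithLp.norm_toLp_fst, hu]
  have hne2 : ‖e2‖ = 1 := by
    rw [he2, hJ, WithLp.equiv_symm_apply, WithLp.norm_toLp_snd, hv]
  set q : ℝ := p.toReal⁻¹ with hqdef
  have hq0 : 0 ≤ q := inv_nonneg.2 ENNReal.toReal_nonneg
  have hq1 : q < 1 := by
    rcases eq_or_ne p ⊤ with h | h
    · simp [hqdef, h]
    · have h1 : (1 : ENNReal).toReal < p.toReal :=
        (ENNReal.toReal_lt_toReal ENNReal.one_ne_top h).2 hp
      simp only [ENNReal.toReal_one] at h1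
      exact inv_lt_one_of_one_lt₀ h1
  -- a helper: the norm on the ℓ_p-sum only depends on the norms of the components
  have hnorm_comp : ∀ (a a' : X) (b b' : Y), ‖a‖ = ‖a'‖ → ‖b‖ = ‖b'‖ →
      ‖J (a, b)‖ = ‖J (a', b')‖ := by
    intro a a' b b' h1 h2
    rcases eq_or_ne p ⊤ with rfl | htop
    · rw [WithLp.prod_norm_eq_sup, WithLp.prod_norm_eq_sup]
      show ‖a‖ ⊔ ‖b‖ = ‖a'‖ ⊔ ‖b'‖
      rw [h1, h2]
    · have hpt : 0 < p.toReal :=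
        ENNReal.toReal_pos (by positivity) htop
      rw [WithLp.prod_norm_eq_add hpt, WithLp.prod_norm_eq_add hpt]
      show (‖a‖ ^ p.toReal + ‖b‖ ^ p.toReal) ^ (1 / p.toReal)
          = (‖a'‖ ^ p.toReal + ‖b'‖ ^ p.toReal) ^ (1 / p.toReal)
      rw [h1, h2]
  set ε : ℝ := (1 - q) / 6 with hεdef
  have hε : 0 < ε := by rw [hεdef]; linarith
  set E : Finset (WithLp p (X × Y)) := {e1, e2} with hE
  have hEnorm : ∀ x ∈ E, ‖x‖ = 1 := by
    intro x hx
    rw [hE, Finset.mem_insert, Finset.mem_singleton] at hx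
    rcases hx with rfl | rfl
    · exact hne1
    · exact hne2
  obtain ⟨y, hy, hY⟩ := hdoh E hEnorm ε hε
  set yX : X := (WithLp.equiv p (X × Y) y).1 with hyX
  set yY : Y := (WithLp.equiv p (X × Y) y).2 with hyY
  set y1 : WithLp p (X × Y) := J (yX, 0) with hy1
  set y2 : WithLp p (X × Y) := J (0, yY) with hy2
  have hysum : y1 + y2 = y := by
    rw [hy1, hy2, hJ, WithLp.equiv_symm_apply, ← WithLp.toLp_add]
    have : (yX, (0 : Y)) + ((0 : X), yY) = (yX, yY) := by simp
    rw [this, hyX, hyY]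
    exact (WithLp.equiv p (X × Y)).symm_apply_apply y
  -- key norm bound
  have hkey : ‖J (yX, v)‖ + ‖J (u, yY)‖ ≤ 2 + q := by
    rcases eq_or_ne p ⊤ with rfl | htop
    · have hysup : ‖yX‖ ⊔ ‖yY‖ = 1 := by
        rw [← hy, WithLp.prod_norm_eq_sup]; rfl
      have hX1 : ‖yX‖ ≤ 1 := le_of_le_of_eq (le_sup_left) hysup
      have hY1 : ‖yY‖ ≤ 1 := le_of_le_of_eq (le_sup_right) hysup
      have n1 : ‖J (yX, v)‖ = ‖yX‖ ⊔ ‖v‖ := by rw [WithLp.prod_norm_eq_sup]; rfl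
      have n2 : ‖J (u, yY)‖ = ‖u‖ ⊔ ‖yY‖ := by rw [WithLp.prod_norm_eq_sup]; rfl
      rw [n1, n2, hu, hv, sup_of_le_right hX1, sup_of_le_left hY1]
      linarith
    · have hpt : 0 < p.toReal := ENNReal.toReal_pos (by positivity) htop
      have hptne : p.toReal ≠ 0 := ne_of_gt hpt
      set s : ℝ := ‖yX‖ ^ p.toReal with hs
      set s' : ℝ := ‖yY‖ ^ p.toReal with hs'
      have hs0 : 0 ≤ s := Real.rpow_nonneg (norm_nonneg _) _
      have hs'0 : 0 ≤ s' := Real.rpow_nonneg (norm_nonneg _) _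
      have hss' : s + s' = 1 := by
        have h1 : (s + s') ^ (1 / p.toReal) = 1 := by
          rw [hs, hs', hyX, hyY]
          exact (WithLp.prod_norm_eq_add hpt y).symm.trans hy
        have h2 : ((s + s') ^ p.toReal⁻¹) ^ p.toReal = 1 ^ p.toReal := by
          rw [← one_div, h1]
        rwa [Real.rpow_inv_rpow (by linarith) hptne, Real.one_rpow] at h2
      have n1 : ‖J (yX, v)‖ = (s + 1) ^ p.toReal⁻¹ := by
        rw [WithLp.prod_norm_eq_add hpt, one_div]
        show (‖yX‖ ^ p.toReal + ‖v‖ ^ p.toReal) ^ p.toReal⁻¹ = _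
        rw [hv, Real.one_rpow]
      have n2 : ‖J (u, yY)‖ = (1 + s') ^ p.toReal⁻¹ := by
        rw [WithLp.prod_norm_eq_add hpt, one_div]
        show (‖u‖ ^ p.toReal + ‖yY‖ ^ p.toReal) ^ p.toReal⁻¹ = _
        rw [hu, Real.one_rpow]
      have b1 : (1 + s) ^ p.toReal⁻¹ ≤ 1 + q * s :=
        rpow_one_add_le_one_add_mul_self (by linarith) hq0 (le_of_lt hq1)
      have b2 : (1 + s') ^ p.toReal⁻¹ ≤ 1 + q * s' :=
        rpow_one_add_le_one_add_mul_self (by linarith) hq0 (le_of_lt hq1)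
      rw [n1, n2, add_comm s 1]
      have : q * s + q * s' = q := by rw [← mul_add, hss', mul_one]
      linarith
  -- instantiate DOH with the decomposition
  have hmain := hY 2 ![y1, y2] (by rw [Fin.sum_univ_two]; simpa using hysum)
    ![e2, e1] (by
      intro i
      fin_cases i
      · simp [hE]
      · simp [hE])
    (fun _ => 1) (fun _ => 1) (fun _ => zero_le_one) (fun _ => zero_le_one)
  rw [Fin.sum_univ_two, Fin.sum_univ_two] at hmain
  simp only [Matrix.cons_val_zero, Matrix.cons_val_one, Matrix.head_cons, one_smul] at hmain
  -- identify the four norms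
  have t1 : e2 + y1 = J (yX, v) := by
    rw [he2, hy1, hJ, WithLp.equiv_symm_apply, ← WithLp.toLp_add]
    congr 1
    simp
  have t2 : e2 - y1 = J (-yX, v) := by
    rw [he2, hy1, hJ, WithLp.equiv_symm_apply, ← WithLp.toLp_sub]
    congr 1
    simp [Prod.ext_iff]
  have t3 : e1 + y2 = J (u, yY) := by
    rw [he1, hy2, hJ, WithLp.equiv_symm_apply, ← WithLp.toLp_add]
    congr 1
    simp
  have t4 : e1 - y2 = J (u, -yY) := by
    rw [he1, hy2, hJ, WithLp.equiv_symm_apply, ← WithLp.toLp_sub]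
    congr 1
    simp [Prod.ext_iff]
  have n2' : ‖J (-yX, v)‖ = ‖J (yX, v)‖ := hnorm_comp _ _ _ _ (norm_neg _) rfl
  have n4' : ‖J (u, -yY)‖ = ‖J (u, yY)‖ := hnorm_comp _ _ _ _ rfl (norm_neg _)
  rw [t1, t2, t3, t4, n2', n4'] at hmain
  -- conclude
  have hfin : (1 - ε) * ((1 + 1 + (1 + 1)) + 2) ≤ 2 * (2 + q) := le_trans hmain (by linarith)
  rw [hεdef] at hfin
  linarith
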